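/- Let n ≥ 1, let a_1,…,a_n be integers, and let P be a natural number with P + a_j ≥ 0 for all 1 ≤ j ≤ n. If S = {i_1 < i_2 < ⋯ < i_k} ⊆ {1,…,n} is a nonempty subset with a_{i_1} + ⋯ + a_{i_k} = 0, then the sequence 0 < i_1 < ⋯ < i_k < n+1 is a directed path from s = 0 to t = n+1 in G'_A of total weight exactly K = (n+1)P. -/

import Mathlib

def gaWeight' (n : ℕ) (a : ℕ → ℤ) (P : ℕ) (i j : ℕ) : ℤ :=
  if j ≤ n then ((j : ℤ) - (i : ℤ)) * (P : ℤ) + a j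
  else if i = 0 then ((n : ℤ) + 1) * (P : ℤ) + 1
  else ((n : ℤ) + 1 - (i : ℤ)) * (P : ℤ)

theorem subsetSum_to_kWeightedPath (n : ℕ) (hn : 1 ≤ n) (a : ℕ → ℤ) (P : ℕ)
    (hP : ∀ j, 1 ≤ j → j ≤ n → 0 ≤ (P : ℤ) + a j)
    (S : Finset ℕ) (hSne : S.Nonempty) (hSsub : S ⊆ Finset.Icc 1 n)
    (hSsum : ∑ j ∈ S, a j = 0) :
    ∃ x : ℕ → ℕ, x 0 = 0 ∧ x (S.card + 1) = n + 1 ∧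
      (∀ r, r < S.card + 1 → x r < x (r + 1)) ∧
      Finset.image x (Finset.Icc 1 S.card) = S ∧
      ∑ r ∈ Finset.range (S.card + 1), gaWeight' n a P (x r) (x (r + 1)) =
        ((n : ℤ) + 1) * (P : ℤ) := by
  classical
  set k := S.card with hk
  have hk1 : 1 ≤ k := Finset.card_pos.mpr hSne
  set e := S.orderIsoOfFin (rfl : S.card = k) with he
  set f : ℕ → ℕ := fun r => if h : r < k then (e ⟨r, h⟩ : ℕ) else n + 1 with hf
  set x : ℕ → ℕ := fun r => if r = 0 then 0 else f (r - 1) with hx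
  have hfS : ∀ r, r < k → f r ∈ S := by
    intro r h; simp only [hf, dif_pos h]; exact (e ⟨r, h⟩).2
  have hf1 : ∀ r, r < k → 1 ≤ f r ∧ f r ≤ n := by
    intro r h; exact Finset.mem_Icc.mp (hSsub (hfS r h))
  have hfinj : ∀ r r', r < k → r' < k → f r = f r' → r = r' := by
    intro r r' h h' heq
    simp only [hf, dif_pos h, dif_pos h'] at heq
    have := e.injective (Subtype.ext heq)
    simpa using this
  have hfmono : ∀ r, r + 1 < k → f r < f (r + 1) := by
    intro r h
    have h' : r < k := Nat.lt_of_succ_lt h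
    simp only [hf, dif_pos h, dif_pos h']
    exact_mod_cast e.strictMono (show (⟨r, h'⟩ : Fin k) < ⟨r + 1, h⟩ from Nat.lt_succ_self r)
  have hx0 : x 0 = 0 := rfl
  have hxtop : x (k + 1) = n + 1 := by
    simp only [hx, if_neg (Nat.succ_ne_zero k), Nat.add_sub_cancel, hf,
      dif_neg (lt_irrefl k)]
  have hxval : ∀ r, 1 ≤ r → x r = f (r - 1) := by
    intro r hr; simp [hx, Nat.one_le_iff_ne_zero.mp hr]
  have hxmono : ∀ r, r < k + 1 → x r < x (r + 1) := by
    intro r hr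
    rcases Nat.eq_zero_or_pos r with h0 | h1
    · subst h0
      have : x 1 = f 0 := hxval 1 le_rfl
      rw [hx0, this]
      exact lt_of_lt_of_le Nat.one_pos (hf1 0 hk1).1
    · rw [hxval r h1, hxval (r + 1) (le_trans h1 (Nat.le_succ r)), Nat.add_sub_cancel]
      rcases lt_or_eq_of_le (Nat.lt_succ_iff.mp hr) with h | h
      · have : (r - 1) + 1 = r := Nat.succ_pred_eq_of_pos h1
        rw [← this]; exact hfmono (r - 1) (by omega)
      · have h1' : f (r - 1) ≤ n := (hf1 (r - 1) (by omega)).2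
        have hfk : f r = n + 1 := by rw [h]; simp [hf]
        omega
  have himg : Finset.image x (Finset.Icc 1 k) = S := by
    ext m
    simp only [Finset.mem_image, Finset.mem_Icc]
    constructor
    · rintro ⟨r, ⟨hr1, hrk⟩, rfl⟩
      rw [hxval r hr1]
      exact hfS (r - 1) (by omega)
    · intro hm
      obtain ⟨i, hi⟩ := e.surjective ⟨m, hm⟩
      refine ⟨i + 1, ⟨by omega, by omega⟩, ?_⟩
      rw [hxval (i + 1) (by omega), Nat.add_sub_cancel]
      simp only [hf, dif_pos (show (i : ℕ) < k from i.2), Fin.eta, hi]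
  refine ⟨x, hx0, hxtop, hxmono, himg, ?_⟩
  have hsum1 : ∀ r ∈ Finset.range k, gaWeight' n a P (x r) (x (r + 1)) =
      ((x (r + 1) : ℤ) - (x r : ℤ)) * (P : ℤ) + a (x (r + 1)) := by
    intro r hr
    rw [Finset.mem_range] at hr
    have hle : x (r + 1) ≤ n := by
      rw [hxval (r + 1) (by omega), Nat.add_sub_cancel]; exact (hf1 r hr).2
    simp [gaWeight', hle]
  rw [Finset.sum_range_succ, Finset.sum_congr rfl hsum1, Finset.sum_add_distrib,
    ← Finset.sum_mul, Finset.sum_range_sub (fun r => (x r : ℤ))]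
  have hsumA : ∑ r ∈ Finset.range k, a (x (r + 1)) = ∑ j ∈ S, a j := by
    refine Finset.sum_bij (fun r _ => x (r + 1)) ?_ ?_ ?_ ?_
    · intro r hr
      rw [Finset.mem_range] at hr
      show x (r + 1) ∈ S
      rw [hxval (r + 1) (by omega), Nat.add_sub_cancel]
      exact hfS r hr
    · intro r hr r' hr' heq
      rw [Finset.mem_range] at hr hr'
      have heq' : x (r + 1) = x (r' + 1) := heq
      rw [hxval (r + 1) (by omega), hxval (r' + 1) (by omega),
        Nat.add_sub_cancel, Nat.add_sub_cancel] at heq'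
      exact hfinj r r' hr hr' heq'
    · intro m hm
      obtain ⟨i, hi⟩ := e.surjective ⟨m, hm⟩
      refine ⟨i, Finset.mem_range.mpr i.2, ?_⟩
      show x ((i : ℕ) + 1) = m
      rw [hxval (i + 1) (by omega), Nat.add_sub_cancel]
      simp only [hf, dif_pos (show (i : ℕ) < k from i.2), Fin.eta, hi]
    · intro r hr; rfl
  rw [hsumA, hSsum]
  have hxk1 : 1 ≤ x k ∧ x k ≤ n := by
    rw [hxval k hk1]; exact hf1 (k - 1) (by omega)
  have hlast : gaWeight' n a P (x k) (x (k + 1)) = ((n : ℤ) + 1 - (x k : ℤ)) * (P : ℤ) := by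
    rw [hxtop]
    simp [gaWeight', show ¬ n + 1 ≤ n by omega, show x k ≠ 0 by omega]
  rw [hlast, hx0]
  push_cast
  ring
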